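/- For an EDBM M in normal form on clocks C and a clock x ∈ C, let rel_x(M) be obtained by replacing every entry in the row and column of x (except the diagonal handling) by (?,=). Then ⟦rel_x(M)⟧ = rel_x(⟦M⟧) = { v[x:=d] : v ∈ ⟦M⟧, d ∈ ℝ≥0 ∪ {⊥} }. -/

import Mathlib

open scoped Classical

/-- Entries of an Event DBM: `(m,<)` / `(m,≤)` for `m ∈ ℤ`, `(∞,<)`, `(⊥,=)`, `(?,=)`. -/
inductive Entry where
  | bound (m : ℤ) (strict : Bool)
  | inf
  | bot
  | unc
deriving DecidableEq

/-- An EDBM on clocks `x₁,…,xₙ` (index `none` is the zero clock `x₀`). -/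
def EDBM (n : ℕ) := Option (Fin n) → Option (Fin n) → Entry

/-- A valuation of the `n` clocks (`none` is `⊥`). -/
def EVal (n : ℕ) := Fin n → Option ℝ

def ENonneg {n : ℕ} (v : EVal n) : Prop := ∀ i r, v i = some r → 0 ≤ r

/-- The signed value `|v|`: prophecy clocks (as given by `isP`) are negated;
`x₀` has value `0`. -/
def svalE {n : ℕ} (isP : Fin n → Bool) (v : EVal n) : Option (Fin n) → Option ℝ
  | none => some 0
  | some i => (v i).map (fun r => if isP i then -r else r)

/-- Satisfaction of an entry by (signed) values `a`, `b`: encodes `a − b ≺ m`,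
with `(⊥,=)` requiring one side to be `⊥`, `(∞,<)` requiring both sides real,
and `(?,=)` always true. -/
def Entry.sat : Entry → Option ℝ → Option ℝ → Prop
  | .unc, _, _ => True
  | .bot, a, b => a = none ∨ b = none
  | .inf, a, b => a ≠ none ∧ b ≠ none
  | .bound m s, a, b => ∃ ra rb, a = some ra ∧ b = some rb ∧
      (if s then ra - rb < (m : ℝ) else ra - rb ≤ (m : ℝ))

/-- `⟦M⟧`: the set of valuations satisfying all constraints of `M`. -/
def sem {n : ℕ} (isP : Fin n → Bool) (M : EDBM n) : Set (EVal n) :=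
  { v | ENonneg v ∧ ∀ i j, (M i j).sat (svalE isP v i) (svalE isP v j) }

/-- The ordering on EDBM entries: `(m,≺) ≤ (m',≺')` iff `m' = ?`, or
`m < m'` (in `ℤ ∪ {∞}`), or `m = m'` and (`≺ = ≺'` or `≺' = ≤`). -/
def Entry.le : Entry → Entry → Prop
  | _, .unc => True
  | .unc, _ => False
  | .bot, .bot => True
  | .bot, _ => False
  | _, .bot => False
  | .inf, .inf => True
  | .inf, .bound _ _ => False
  | .bound _ _, .inf => True
  | .bound m s, .bound m' s' => m < m' ∨ (m = m' ∧ (s = s' ∨ s' = false))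

/-- The canonical empty EDBM `M_∅`. -/
def Mempty (n : ℕ) : EDBM n := fun _ _ => .bound (-1) true

/-- `(⊥,=)` may only occur in row or column `0`. -/
def EDBM.WF {n : ℕ} (M : EDBM n) : Prop := ∀ i j : Fin n, M (some i) (some j) ≠ .bot

/-- Structural coherence of `⊥`/`?` entries (conditions (i)–(iii) of normal form). -/
def Coherent {n : ℕ} (M : EDBM n) : Prop :=
  (∀ i : Fin n, (M (some i) none = .bot ↔ M none (some i) = .bot) ∧
      (M (some i) none = .unc ↔ M none (some i) = .unc)) ∧
  (∀ i : Fin n, (M (some i) none = .bot ∨ M (some i) none = .unc) →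
      ∀ j : Fin n, M (some i) (some j) = .unc ∧ M (some j) (some i) = .unc) ∧
  (∀ i j : Fin n, M (some i) (some j) = .unc ↔
      ((M (some i) none = .unc ∨ M (some i) none = .bot) ∨
       (M (some j) none = .unc ∨ M (some j) none = .bot)))

/-- Tightness: no entrywise-smaller EDBM has the same semantics. -/
def Tight {n : ℕ} (isP : Fin n → Bool) (M : EDBM n) : Prop :=
  ∀ M' : EDBM n, (∀ i j, Entry.le (M' i j) (M i j)) → sem isP M' = sem isP M → M' = M

/-- Normal form: either the canonical empty EDBM, or a nonempty, well-formed,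
coherent and tight (canonical) EDBM. -/
def InNormalForm {n : ℕ} (isP : Fin n → Bool) (M : EDBM n) : Prop :=
  M = Mempty n ∨ (sem isP M ≠ ∅ ∧ M.WF ∧ Coherent M ∧ Tight isP M)

/-- The `Future` operation on EDBMs. -/
noncomputable def futureE {n : ℕ} (isP : Fin n → Bool) (M : EDBM n) : EDBM n :=
  if M = Mempty n then Mempty n else
  fun i j =>
    match i, j with
    | some k, none =>
        if M (some k) none = .bot ∨ M (some k) none = .unc then M (some k) none
        else if isP k then .bound 0 false else .inf
    | i, j => M i j

/-- The `Past` operation on EDBMs. -/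
noncomputable def pastE {n : ℕ} (isP : Fin n → Bool) (M : EDBM n) : EDBM n :=
  if M = Mempty n then Mempty n else
  fun i j =>
    match i, j with
    | none, some k =>
        if M none (some k) = .bot ∨ M none (some k) = .unc then M none (some k)
        else if isP k then .inf else .bound 0 false
    | i, j => M i j

/-- Entrywise intersection of EDBMs; `M_∅` if either input is empty or some pair
of entries is `≤`-incomparable. -/
noncomputable def interE {n : ℕ} (M₁ M₂ : EDBM n) : EDBM n :=
  if M₁ = Mempty n ∨ M₂ = Mempty n then Mempty n
  else if ∀ i j, Entry.le (M₁ i j) (M₂ i j) ∨ Entry.le (M₂ i j) (M₁ i j) then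
    fun i j => if Entry.le (M₁ i j) (M₂ i j) then M₁ i j else M₂ i j
  else Mempty n

/-- Release of clock `k`: every entry in its row and column becomes `(?,=)`. -/
noncomputable def relE {n : ℕ} (M : EDBM n) (k : Fin n) : EDBM n :=
  if M = Mempty n then Mempty n else
  fun i j => if i = some k ∨ j = some k then .unc else M i j

/-- Time elapse on valuations: history clocks increase, prophecy clocks decrease. -/
def eElapse {n : ℕ} (isP : Fin n → Bool) (v : EVal n) (t : ℝ) : EVal n :=
  fun i => (v i).map (fun r => if isP i then r - t else r + t)

def eCanElapse {n : ℕ} (isP : Fin n → Bool) (v : EVal n) (t : ℝ) : Prop :=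
  0 ≤ t ∧ ∀ i r, isP i = true → v i = some r → t ≤ r

section RelAux

lemma entry_le_refl (e : Entry) : Entry.le e e := by
  cases e <;> simp [Entry.le]

lemma le_sat : ∀ {e e' : Entry}, Entry.le e e' → ∀ {a b : Option ℝ}, e.sat a b → e'.sat a b := by
  intro e e' h a b hs
  cases e <;> cases e' <;>
    simp only [Entry.le, Entry.sat] at h hs ⊢ <;> try trivial
  case bound.bound m s m' s' =>
    obtain ⟨ra, rb, h1, h2, h3⟩ := hs
    refine ⟨ra, rb, h1, h2, ?_⟩
    rcases h with h | ⟨rfl, h⟩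
    · have hm : (m : ℝ) < m' := by exact_mod_cast h
      split at h3 <;> split <;> linarith
    · rcases h with rfl | rfl
      · exact h3
      · simp only [if_false, Bool.false_eq_true]
        split at h3 <;> linarith
  case bound.inf m s =>
    obtain ⟨ra, rb, h1, h2, _⟩ := hs
    exact ⟨by simp [h1], by simp [h2]⟩

lemma sem_Mempty {n : ℕ} (isP : Fin n → Bool) : sem isP (Mempty n) = ∅ := by
  ext v
  simp only [sem, Set.mem_setOf_eq, Set.mem_empty_iff_false, iff_false, not_and]
  intro _ hsat
  have := hsat none none
  simp only [Mempty, Entry.sat, svalE] at this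
  obtain ⟨ra, rb, h1, h2, h3⟩ := this
  obtain rfl : (0:ℝ) = ra := by injection h1
  obtain rfl : (0:ℝ) = rb := by injection h2
  norm_num at h3

lemma tighten {n : ℕ} (isP : Fin n → Bool) (M : EDBM n)
    (hT : Tight isP M) {i j : Option (Fin n)} {e : Entry}
    (hle : Entry.le e (M i j)) (hne : e ≠ M i j)
    (hall : ∀ v ∈ sem isP M, e.sat (svalE isP v i) (svalE isP v j)) : False := by
  classical
  set M' : EDBM n := fun i' j' => if i' = i ∧ j' = j then e else M i' j' with hM'
  have h1 : ∀ i' j', Entry.le (M' i' j') (M i' j') := by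
    intro i' j'
    by_cases hc : i' = i ∧ j' = j
    · obtain ⟨rfl, rfl⟩ := hc
      simpa [hM'] using hle
    · simp [hM', hc, entry_le_refl]
  have h2 : sem isP M' = sem isP M := by
    ext v
    constructor
    · rintro ⟨hnn, hsat⟩
      exact ⟨hnn, fun i' j' => le_sat (h1 i' j') (hsat i' j')⟩
    · rintro hv
      refine ⟨hv.1, fun i' j' => ?_⟩
      by_cases hc : i' = i ∧ j' = j
      · obtain ⟨rfl, rfl⟩ := hc
        simpa [hM'] using hall v hv
      · have := hv.2 i' j'
        simpa [hM', hc] using this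
  have h3 := hT M' h1 h2
  apply hne
  have h4 : M' i j = M i j := by rw [h3]
  simpa [hM'] using h4

lemma le_total' (a : Entry) (m : ℤ) (s : Bool) (hb : a ≠ .bot) :
    Entry.le a (.bound m s) ∨ (Entry.le (.bound m s) a ∧ Entry.bound m s ≠ a) := by
  cases a with
  | bot => exact absurd rfl hb
  | inf => exact Or.inr ⟨trivial, by simp⟩
  | unc => exact Or.inr ⟨trivial, by simp⟩
  | bound m' s' =>
    rcases lt_trichotomy m' m with h | rfl | h
    · exact Or.inl (Or.inl h)
    · cases s with
      | false => exact Or.inl (Or.inr ⟨rfl, Or.inr rfl⟩)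
      | true =>
        cases s' with
        | true => exact Or.inl (Or.inr ⟨rfl, Or.inl rfl⟩)
        | false => exact Or.inr ⟨Or.inr ⟨rfl, Or.inr rfl⟩, by simp⟩
    · exact Or.inr ⟨Or.inl h, by intro hh; injection hh with h1 h2; omega⟩

end RelAux
section RelAux2

/-- Value of a bound entry. -/
def Entry.bVal : Entry → ℤ
  | .bound m _ => m
  | _ => 0

/-- Strictness of a bound entry. -/
def Entry.bStr : Entry → Bool
  | .bound _ s => s
  | _ => false

lemma sum_sat {n : ℕ} (isP : Fin n → Bool) (M : EDBM n) (k : Fin n)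
    {i j : Option (Fin n)} {m₁ m₂ : ℤ} {s₁ s₂ : Bool}
    (h1 : M i (some k) = .bound m₁ s₁) (h2 : M (some k) j = .bound m₂ s₂) :
    ∀ v ∈ sem isP M, Entry.sat (.bound (m₁ + m₂) (s₁ || s₂)) (svalE isP v i) (svalE isP v j) := by
  rintro v ⟨hnn, hsat⟩
  have A := hsat i (some k); rw [h1] at A
  have B := hsat (some k) j; rw [h2] at B
  obtain ⟨ra, rb, hA1, hA2, hA3⟩ := A
  obtain ⟨rb', rc, hB1, hB2, hB3⟩ := B
  obtain rfl : rb = rb' := by rw [hA2] at hB1; injection hB1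
  refine ⟨ra, rc, hA1, hB2, ?_⟩
  have hc : ((m₁ + m₂ : ℤ) : ℝ) = (m₁ : ℝ) + (m₂ : ℝ) := by push_cast; ring
  rw [hc]
  cases s₁ <;> cases s₂ <;> simp only [Bool.or_self, Bool.false_or, Bool.or_false,
    Bool.true_or, Bool.or_true, if_true, if_false] at hA3 hB3 ⊢ <;>
    first
      | linarith
      | (simp only [Bool.false_eq_true, if_false, if_true] at hA3 hB3 ⊢; linarith)

lemma canon {n : ℕ} (isP : Fin n → Bool) (M : EDBM n)
    (hne : (sem isP M).Nonempty) (hWF : M.WF) (hC : Coherent M) (hT : Tight isP M)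
    (k : Fin n) {i j : Option (Fin n)} (hi : i ≠ some k) (hj : j ≠ some k)
    {m₁ m₂ : ℤ} {s₁ s₂ : Bool}
    (h1 : M i (some k) = .bound m₁ s₁) (h2 : M (some k) j = .bound m₂ s₂) :
    Entry.le (M i j) (.bound (m₁ + m₂) (s₁ || s₂)) := by
  have hbot : M i j ≠ .bot := by
    intro hb
    match i, j with
    | none, none =>
      obtain ⟨v, hv⟩ := hne
      have := hv.2 none none
      rw [hb] at this
      simp [Entry.sat, svalE] at this
    | none, some j₀ =>
      have hb2 : M (some j₀) none = .bot := (hC.1 j₀).1.mpr hb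
      have := (hC.2.1 j₀ (Or.inl hb2) k).2
      rw [h2] at this; exact Entry.noConfusion this
    | some i₀, none =>
      have := (hC.2.1 i₀ (Or.inl hb) k).1
      rw [h1] at this; exact Entry.noConfusion this
    | some i₀, some j₀ => exact hWF i₀ j₀ hb
  rcases le_total' (M i j) (m₁ + m₂) (s₁ || s₂) hbot with h | ⟨hge, hneq⟩
  · exact h
  · exact absurd (tighten isP M hT hge hneq (sum_sat isP M k h1 h2)) (by simp)

lemma sval_real {n : ℕ} (isP : Fin n → Bool) {v : EVal n} {e : Entry} {k : Fin n}
    (hbot : e ≠ .bot) (hunc : e ≠ .unc)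
    (hs : e.sat (svalE isP v k) (some 0) ∨ e.sat (some 0) (svalE isP v k)) :
    ∃ r, svalE isP v (some k) = some r := by
  cases e with
  | bot => exact absurd rfl hbot
  | unc => exact absurd rfl hunc
  | inf =>
    rcases hs with ⟨h, -⟩ | ⟨-, h⟩ <;>
      · rcases hx : svalE isP v (some k) with - | r
        · exact absurd hx h
        · exact ⟨r, rfl⟩
  | bound m s =>
    rcases hs with ⟨ra, rb, hA, -, -⟩ | ⟨ra, rb, -, hB, -⟩
    exacts [⟨ra, hA⟩, ⟨rb, hB⟩]

/-- sign bound for a non-free history clock -/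
lemma sign_hist {n : ℕ} (isP : Fin n → Bool) (M : EDBM n)
    (hne : (sem isP M).Nonempty) (hC : Coherent M) (hT : Tight isP M)
    {k : Fin n} (hk : isP k = false)
    (hnf : ¬(M (some k) none = .bot ∨ M (some k) none = .unc)) :
    ∃ m s, M none (some k) = .bound m s ∧ m ≤ 0 := by
  push_neg at hnf
  have hall : ∀ v ∈ sem isP M, Entry.sat (.bound 0 false) (some 0) (svalE isP v (some k)) := by
    intro v hv
    obtain ⟨r, hr⟩ := sval_real isP (e := M (some k) none) hnf.1 hnf.2
      (Or.inl (by simpa [svalE] using hv.2 (some k) none))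
    obtain ⟨r', hr', rfl⟩ := Option.map_eq_some_iff.mp hr
    refine ⟨0, _, rfl, hr, ?_⟩
    have := hv.1 k r' hr'
    simp [hk]; linarith
  have hb : M none (some k) ≠ .bot := by
    intro hbb; exact hnf.1 ((hC.1 k).1.mpr hbb)
  rcases le_total' (M none (some k)) 0 false hb with h | ⟨hge, hneq⟩
  · cases he : M none (some k) with
    | bound m s =>
      rw [he] at h
      rcases h with h | ⟨h, -⟩
      · exact ⟨m, s, rfl, le_of_lt h⟩
      · exact ⟨m, s, rfl, le_of_eq h⟩
    | inf => rw [he] at h; exact absurd h (by simp [Entry.le])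
    | unc => rw [he] at h; exact absurd h (by simp [Entry.le])
    | bot => exact absurd he hb
  · exact absurd (tighten isP M hT hge hneq hall) (by simp)

/-- sign bound for a non-free prophecy clock -/
lemma sign_proph {n : ℕ} (isP : Fin n → Bool) (M : EDBM n)
    (hne : (sem isP M).Nonempty) (hC : Coherent M) (hT : Tight isP M)
    {k : Fin n} (hk : isP k = true)
    (hnf : ¬(M (some k) none = .bot ∨ M (some k) none = .unc)) :
    ∃ m s, M (some k) none = .bound m s ∧ m ≤ 0 := by
  push_neg at hnf
  have hall : ∀ v ∈ sem isP M, Entry.sat (.bound 0 false) (svalE isP v (some k)) (some 0) := by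
    intro v hv
    obtain ⟨r, hr⟩ := sval_real isP (e := M (some k) none) hnf.1 hnf.2
      (Or.inl (by simpa [svalE] using hv.2 (some k) none))
    obtain ⟨r', hr', rfl⟩ := Option.map_eq_some_iff.mp hr
    refine ⟨_, 0, hr, rfl, ?_⟩
    have := hv.1 k r' hr'
    simp [hk]; linarith
  rcases le_total' (M (some k) none) 0 false hnf.1 with h | ⟨hge, hneq⟩
  · cases he : M (some k) none with
    | bound m s =>
      rw [he] at h
      rcases h with h | ⟨h, -⟩
      · exact ⟨m, s, rfl, le_of_lt h⟩
      · exact ⟨m, s, rfl, le_of_eq h⟩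
    | inf => rw [he] at h; exact absurd h (by simp [Entry.le])
    | unc => exact absurd he hnf.2
    | bot => exact absurd he hnf.1
  · exact absurd (tighten isP M hT hge hneq hall) (by simp)

lemma EVal.update_self {n : ℕ} (v : EVal n) (k : Fin n) (d : Option ℝ) :
    Function.update v k d k = d :=
  Function.update_self _ _ _

lemma EVal.update_of_ne {n : ℕ} {j k : Fin n} (h : j ≠ k) (d : Option ℝ) (v : EVal n) :
    Function.update v k d j = v j :=
  Function.update_of_ne h _ _

lemma svalE_update_ne {n : ℕ} (isP : Fin n → Bool) (v : EVal n) (k : Fin n) (d : Option ℝ)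
    {i : Option (Fin n)} (hi : i ≠ some k) :
    svalE isP (Function.update v k d) i = svalE isP v i := by
  match i with
  | none => rfl
  | some j =>
    have hjk : j ≠ k := fun h => hi (by rw [h])
    simp [svalE, EVal.update_of_ne hjk]

lemma svalE_update_k {n : ℕ} (isP : Fin n → Bool) (v : EVal n) (k : Fin n) (s : ℝ) :
    svalE isP (Function.update v k (some (if isP k then -s else s))) (some k) = some s := by
  simp only [svalE, EVal.update_self]
  cases h : isP k <;> simp [h]

end RelAux2
section RelAux3

lemma exists_sep {ι : Type*} (L U : Finset ι) (lval uval : ι → ℝ) (lstr ustr : ι → Bool)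
    (pair : ∀ i ∈ L, ∀ j ∈ U,
      if lstr i || ustr j then lval i < uval j else lval i ≤ uval j) :
    ∃ sv : ℝ, (∀ i ∈ L, if lstr i then lval i < sv else lval i ≤ sv) ∧
              (∀ j ∈ U, if ustr j then sv < uval j else sv ≤ uval j) := by
  have weak : ∀ i ∈ L, ∀ j ∈ U, lval i ≤ uval j := by
    intro i hi j hj
    have := pair i hi j hj
    split at this
    · linarith
    · exact this
  by_cases hL : L.Nonempty <;> by_cases hU : U.Nonempty
  · obtain ⟨i₀, hi₀, hA⟩ := Finset.exists_mem_eq_sup' hL lval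
    obtain ⟨j₀, hj₀, hB⟩ := Finset.exists_mem_eq_inf' hU uval
    set A := L.sup' hL lval with hAdef
    set B := U.inf' hU uval with hBdef
    have hAB : A ≤ B := by rw [hA, hB]; exact weak i₀ hi₀ j₀ hj₀
    refine ⟨(A + B) / 2, ?_, ?_⟩
    · intro i hi
      have h1 : lval i ≤ A := Finset.le_sup' lval hi
      cases hst : lstr i with
      | false => simp only [hst, Bool.false_eq_true, if_false]; linarith
      | true =>
        have h2 := pair i hi j₀ hj₀
        rw [hst] at h2
        simp only [Bool.true_or, if_true] at h2
        rw [hB] at *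
        simp only [hst, if_true]
        linarith
    · intro j hj
      have h1 : B ≤ uval j := Finset.inf'_le uval hj
      cases hst : ustr j with
      | false => simp only [hst, Bool.false_eq_true, if_false]; linarith
      | true =>
        have h2 := pair i₀ hi₀ j hj
        rw [hst] at h2
        simp only [Bool.or_true, if_true] at h2
        rw [hA] at *
        simp only [hst, if_true]
        linarith
  · refine ⟨L.sup' hL lval + 1, ?_, fun j hj => absurd ⟨j, hj⟩ hU⟩
    intro i hi
    have h1 : lval i ≤ L.sup' hL lval := Finset.le_sup' lval hi
    split <;> linarith
  · refine ⟨U.inf' hU uval - 1, fun i hi => absurd ⟨i, hi⟩ hL, ?_⟩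
    intro j hj
    have h1 : U.inf' hU uval ≤ uval j := Finset.inf'_le uval hj
    split <;> linarith
  · exact ⟨0, fun i hi => absurd ⟨i, hi⟩ hL, fun j hj => absurd ⟨j, hj⟩ hU⟩

end RelAux3
/-- Correctness of release on normal-form EDBMs:
`⟦rel_x(M)⟧ = { v[x := d] : v ∈ ⟦M⟧, d ∈ ℝ≥0 ∪ {⊥} }`. -/
theorem relE_correct {n : ℕ} (isP : Fin n → Bool) (M : EDBM n) (k : Fin n)
    (h : InNormalForm isP M) :
    sem isP (relE M k) =
      { w | ∃ v ∈ sem isP M, ∃ d : Option ℝ, (∀ r, d = some r → 0 ≤ r) ∧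
          w = Function.update v k d } := by
  rcases h with hM | ⟨hne, hWF, hC, hT⟩
  · subst hM
    have h1 : relE (Mempty n) k = Mempty n := if_pos rfl
    rw [h1]
    ext w
    simp [sem_Mempty]
    intro h; exact h
  · have hne' : (sem isP M).Nonempty := Set.nonempty_iff_ne_empty.mpr hne
    have hMne : M ≠ Mempty n := by
      intro hEq
      exact hne (by rw [hEq, sem_Mempty])
    have hrel : relE M k =
        fun i j => if i = some k ∨ j = some k then Entry.unc else M i j := if_neg hMne
    ext w
    constructor
    · rintro ⟨hnnw, hsatw⟩
      have hsat' : ∀ i j, i ≠ some k → j ≠ some k →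
          (M i j).sat (svalE isP w i) (svalE isP w j) := by
        intro i j hi hj
        have := hsatw i j
        rw [hrel] at this
        simpa only [if_neg (not_or.mpr ⟨hi, hj⟩)] using this
      suffices hv : ∃ d : Option ℝ, (∀ r, d = some r → 0 ≤ r) ∧
          Function.update w k d ∈ sem isP M by
        obtain ⟨d, hd, hmem⟩ := hv
        refine ⟨Function.update w k d, hmem, w k, fun r hr => hnnw k r hr, ?_⟩
        funext i
        by_cases hik : i = k
        · subst hik; simp [EVal.update_self]
        · exact ((Function.update_of_ne hik _ _).trans (Function.update_of_ne hik _ _)).symm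
      by_cases hbot : M (some k) none = Entry.bot
      · -- case A : k is ⊥-free
        refine ⟨none, fun r hr => by simp at hr, ?_, ?_⟩
        · intro i r hr
          by_cases hik : i = k
          · subst hik; rw [EVal.update_self] at hr; simp at hr
          · rw [EVal.update_of_ne hik] at hr; exact hnnw i r hr
        · intro i j
          have hkn : svalE isP (Function.update w k (none : Option ℝ)) (some k) = none := by
            simp [svalE, EVal.update_self]
          by_cases hik : i = some k <;> by_cases hjk : j = some k
          · subst hik; subst hjk
            rw [(hC.2.1 k (Or.inl hbot) k).1]; trivial
          · subst hik
            cases j with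
            | none => rw [hbot]; exact Or.inl hkn
            | some j₀ => rw [(hC.2.1 k (Or.inl hbot) j₀).1]; trivial
          · subst hjk
            cases i with
            | none => rw [(hC.1 k).1.mp hbot]; exact Or.inr hkn
            | some i₀ => rw [(hC.2.1 k (Or.inl hbot) i₀).2]; trivial
          · rw [svalE_update_ne isP w k _ hik, svalE_update_ne isP w k _ hjk]
            exact hsat' i j hik hjk
      · by_cases hunc : M (some k) none = Entry.unc
        · -- case B : k is unconstrained
          refine ⟨some 0, fun r hr => by injection hr with hr; exact hr.le, ?_, ?_⟩
          · intro i r hr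
            by_cases hik : i = k
            · rw [hik, EVal.update_self] at hr
              injection hr with hr; exact hr.le
            · rw [EVal.update_of_ne hik] at hr; exact hnnw i r hr
          · intro i j
            by_cases hik : i = some k <;> by_cases hjk : j = some k
            · subst hik; subst hjk
              rw [(hC.2.1 k (Or.inr hunc) k).1]; trivial
            · subst hik
              cases j with
              | none => rw [hunc]; trivial
              | some j₀ => rw [(hC.2.1 k (Or.inr hunc) j₀).1]; trivial
            · subst hjk
              cases i with
              | none => rw [(hC.1 k).2.mp hunc]; trivial
              | some i₀ => rw [(hC.2.1 k (Or.inr hunc) i₀).2]; trivial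
            · rw [svalE_update_ne isP w k _ hik, svalE_update_ne isP w k _ hjk]
              exact hsat' i j hik hjk
        · -- case C : k is constrained
          have hFree : ¬(M (some k) none = Entry.bot ∨ M (some k) none = Entry.unc) :=
            not_or.mpr ⟨hbot, hunc⟩
          have wsome : ∀ i : Option (Fin n), i ≠ some k → M i (some k) ≠ Entry.unc →
              ∃ r, svalE isP w i = some r := by
            intro i hi hu
            cases i with
            | none => exact ⟨0, rfl⟩
            | some j =>
              have hjf : ¬(M (some j) none = Entry.bot ∨ M (some j) none = Entry.unc) :=
                fun hf => hu (hC.2.1 j hf k).1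
              push_neg at hjf
              exact sval_real isP hjf.1 hjf.2 (Or.inl (hsat' (some j) none hi (by simp)))
          have wsome' : ∀ j : Option (Fin n), j ≠ some k → M (some k) j ≠ Entry.unc →
              ∃ r, svalE isP w j = some r := by
            intro j hj hu
            cases j with
            | none => exact ⟨0, rfl⟩
            | some j₀ =>
              have hjf : ¬(M (some j₀) none = Entry.bot ∨ M (some j₀) none = Entry.unc) :=
                fun hf => hu (hC.2.1 j₀ hf k).2
              push_neg at hjf
              exact sval_real isP hjf.1 hjf.2 (Or.inl (hsat' (some j₀) none hj (by simp)))
          classical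
          set Lf : Finset (Option (Fin n)) :=
            Finset.univ.filter (fun i => i ≠ some k ∧ ∃ m s, M i (some k) = Entry.bound m s)
            with hLf
          set Uf : Finset (Option (Fin n)) :=
            Finset.univ.filter (fun j => j ≠ some k ∧ ∃ m s, M (some k) j = Entry.bound m s)
            with hUf
          obtain ⟨sv, hsL, hsU⟩ := exists_sep Lf Uf
            (fun i => (svalE isP w i).getD 0 - ((M i (some k)).bVal : ℝ))
            (fun j => (svalE isP w j).getD 0 + ((M (some k) j).bVal : ℝ))
            (fun i => (M i (some k)).bStr) (fun j => (M (some k) j).bStr)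
            (by
              intro i hi j hj
              rw [hLf, Finset.mem_filter] at hi
              rw [hUf, Finset.mem_filter] at hj
              obtain ⟨-, hik, m₁, s₁, h1⟩ := hi
              obtain ⟨-, hjk, m₂, s₂, h2⟩ := hj
              have hle := canon isP M hne' hWF hC hT k hik hjk h1 h2
              have hs := le_sat hle (hsat' i j hik hjk)
              obtain ⟨ra, rb, hra, hrb, hineq⟩ := hs
              simp only [h1, h2, hra, hrb, Entry.bVal, Entry.bStr, Option.getD_some]
              cases s₁ <;> cases s₂ <;> simp only [Bool.or_self, Bool.false_or,
                  Bool.or_false, Bool.true_or, Bool.or_true, Bool.false_eq_true,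
                  if_true, if_false] at hineq ⊢ <;> push_cast at hineq <;> linarith)
          have hsign : if isP k then sv ≤ 0 else 0 ≤ sv := by
            cases hk : isP k with
            | false =>
              obtain ⟨m, s, hmk, hm0⟩ := sign_hist isP M hne' hC hT hk hFree
              have hmem : none ∈ Lf := by
                rw [hLf, Finset.mem_filter]
                exact ⟨Finset.mem_univ _, by simp, m, s, hmk⟩
              have hh := hsL none hmem
              simp only [hmk, Entry.bVal, Entry.bStr] at hh
              have h0 : svalE isP w none = some 0 := rfl
              rw [h0] at hh
              simp only [Option.getD_some] at hh
              simp only [Bool.false_eq_true, if_false] at hh ⊢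
              have : (m : ℝ) ≤ 0 := by exact_mod_cast hm0
              split at hh <;> linarith
            | true =>
              obtain ⟨m, s, hmk, hm0⟩ := sign_proph isP M hne' hC hT hk hFree
              have hmem : none ∈ Uf := by
                rw [hUf, Finset.mem_filter]
                exact ⟨Finset.mem_univ _, by simp, m, s, hmk⟩
              have hh := hsU none hmem
              simp only [hmk, Entry.bVal, Entry.bStr] at hh
              have h0 : svalE isP w none = some 0 := rfl
              rw [h0] at hh
              simp only [Option.getD_some] at hh
              simp only [if_true] at hh ⊢
              have : (m : ℝ) ≤ 0 := by exact_mod_cast hm0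
              split at hh <;> linarith
          refine ⟨some (if isP k then -sv else sv), ?_, ?_, ?_⟩
          · intro r hr
            injection hr with hr
            subst hr
            cases hk : isP k <;> simp [hk] at hsign ⊢ <;> linarith
          · intro i r hr
            by_cases hik : i = k
            · rw [hik, EVal.update_self] at hr
              injection hr with hr
              subst hr
              cases hk : isP k <;> simp [hk] at hsign ⊢ <;> linarith
            · rw [EVal.update_of_ne hik] at hr; exact hnnw i r hr
          · intro i j
            have hvk := svalE_update_k isP w k sv
            by_cases hik : i = some k <;> by_cases hjk : j = some k
            · subst hik; subst hjk
              cases hd : M (some k) (some k) with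
              | bot => exact absurd hd (hWF k k)
              | unc => trivial
              | inf => exact ⟨by rw [hvk]; simp, by rw [hvk]; simp⟩
              | bound m s =>
                obtain ⟨v₀, hv₀⟩ := hne'
                have h0 := hv₀.2 (some k) (some k)
                rw [hd] at h0
                obtain ⟨ra, rb, h1, h2, h3⟩ := h0
                obtain rfl : ra = rb := by rw [h1] at h2; injection h2
                refine ⟨sv, sv, hvk, hvk, ?_⟩
                rcases Bool.eq_false_or_eq_true s with rfl | rfl <;>
                  simp only [Bool.false_eq_true, if_false, if_true] at h3 ⊢ <;> linarith
            · subst hik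
              cases hd : M (some k) j with
              | unc => trivial
              | bot =>
                cases j with
                | none => exact absurd (Or.inl hd) hFree
                | some j₀ => exact absurd hd (hWF k j₀)
              | inf =>
                obtain ⟨r, hr⟩ := wsome' j hjk (by simp [hd])
                refine ⟨by rw [hvk]; simp, ?_⟩
                rw [svalE_update_ne isP w k _ hjk, hr]; simp
              | bound m₂ s₂ =>
                have hjU : j ∈ Uf := by
                  rw [hUf, Finset.mem_filter]
                  exact ⟨Finset.mem_univ _, hjk, m₂, s₂, hd⟩
                obtain ⟨rj, hrj⟩ := wsome' j hjk (by simp [hd])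
                refine ⟨sv, rj, hvk, by rw [svalE_update_ne isP w k _ hjk]; exact hrj, ?_⟩
                have hh := hsU j hjU
                simp only [hd, Entry.bStr, Entry.bVal, hrj, Option.getD_some] at hh
                rcases Bool.eq_false_or_eq_true s₂ with rfl | rfl <;>
                  simp only [Bool.false_eq_true, if_false, if_true] at hh ⊢ <;> linarith
            · subst hjk
              cases hd : M i (some k) with
              | unc => trivial
              | bot =>
                cases i with
                | none => exact absurd (Or.inl ((hC.1 k).1.mpr hd)) hFree
                | some i₀ => exact absurd hd (hWF i₀ k)
              | inf =>
                obtain ⟨r, hr⟩ := wsome i hik (by simp [hd])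
                refine ⟨?_, by rw [hvk]; simp⟩
                rw [svalE_update_ne isP w k _ hik, hr]; simp
              | bound m₁ s₁ =>
                have hiL : i ∈ Lf := by
                  rw [hLf, Finset.mem_filter]
                  exact ⟨Finset.mem_univ _, hik, m₁, s₁, hd⟩
                obtain ⟨ri, hri⟩ := wsome i hik (by simp [hd])
                refine ⟨ri, sv, by rw [svalE_update_ne isP w k _ hik]; exact hri, hvk, ?_⟩
                have hh := hsL i hiL
                simp only [hd, Entry.bStr, Entry.bVal, hri, Option.getD_some] at hh
                rcases Bool.eq_false_or_eq_true s₁ with rfl | rfl <;>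
                  simp only [Bool.false_eq_true, if_false, if_true] at hh ⊢ <;> linarith
            · rw [svalE_update_ne isP w k _ hik, svalE_update_ne isP w k _ hjk]
              exact hsat' i j hik hjk
    · rintro ⟨v, hv, d, hd, rfl⟩
      refine ⟨?_, ?_⟩
      · intro i r hr
        by_cases hik : i = k
        · subst hik; rw [EVal.update_self] at hr; exact hd r hr
        · rw [EVal.update_of_ne hik] at hr; exact hv.1 i r hr
      · intro i j
        rw [hrel]
        by_cases hc : i = some k ∨ j = some k
        · simp only [if_pos hc]; trivial
        · push_neg at hc
          simp only [if_neg (not_or.mpr ⟨hc.1, hc.2⟩)]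
          rw [svalE_update_ne isP v k _ hc.1, svalE_update_ne isP v k _ hc.2]
          exact hv.2 i j
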